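/- Let $x_{M,j}$ be defined by the expansion $z^M = \sum_{j=0}^M x_{M,j}\, p_j(z)$ in terms of monic orthogonal polynomials $p_j$ on the unit circle with real Szegő parameters $\rho_j$. Then $x_{M+1,M} = \rho_1 - \sum_{i=1}^{M}\rho_i\rho_{i+1}$. -/
import Mathlib


open Polynomial

/-- Closed form for the expansion coefficient of `z^{M+1}` in terms of monic orthogonal
polynomials on the unit circle: `x_{M+1,M} = ρ₁ - ∑_{i=1}^{M} ρ_i ρ_{i+1}`. -/
theorem stmt12 (ρ : ℕ → ℝ) (p : ℕ → Polynomial ℂ)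
    (hp0 : p 0 = 1)
    (hmonic : ∀ n, (p n).Monic ∧ (p n).natDegree = n)
    (hrec : ∀ M, p (M + 1) = X * p M - C ((ρ (M + 1) : ℂ)) * (p M).reverse)
    (x : ℕ → ℕ → ℂ)
    (hx : ∀ M : ℕ, (X : Polynomial ℂ) ^ M = ∑ j ∈ Finset.range (M + 1), C (x M j) * p j) :
    ∀ M : ℕ, x (M + 1) M = (ρ 1 : ℂ) - ∑ i ∈ Finset.Icc 1 M, (ρ i : ℂ) * (ρ (i + 1) : ℂ) := by
  -- leading coefficient of p n is 1
  have hlead : ∀ n, (p n).coeff n = 1 := by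
    intro n
    have h := (hmonic n).1
    have hd := (hmonic n).2
    simpa [Monic, leadingCoeff, hd] using h
  -- constant term of p (M+1) is -ρ (M+1)
  have hconst : ∀ M, (p (M + 1)).coeff 0 = -(ρ (M + 1) : ℂ) := by
    intro M
    have hrev : (p M).reverse.coeff 0 = 1 := by
      rw [coeff_reverse]
      simp [(hmonic M).2, hlead M]
    rw [hrec M]
    simp [coeff_sub, coeff_X_mul, hrev]
  -- subleading coefficient of p (M+1)
  have hsub : ∀ M, (p (M + 1)).coeff M
      = -(ρ 1 : ℂ) + ∑ i ∈ Finset.Icc 1 M, (ρ i : ℂ) * (ρ (i + 1) : ℂ) := by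
    intro M
    induction M with
    | zero =>
        simp [hconst 0]
    | succ M ih =>
        have hrev : (p (M + 1)).reverse.coeff (M + 1) = -(ρ (M + 1) : ℂ) := by
          rw [coeff_reverse, (hmonic (M + 1)).2]
          simp [hconst M]
        rw [hrec (M + 1)]
        rw [coeff_sub, coeff_X_mul, coeff_C_mul, hrev, ih]
        rw [Finset.sum_Icc_succ_top (by omega : 1 ≤ M + 1)]
        ring
  intro M
  -- coefficient at degree M+1 of hx (M+1) gives x (M+1) (M+1) = 1
  have hxt : x (M + 1) (M + 1) = 1 := by
    have h := congrArg (fun q => q.coeff (M + 1)) (hx (M + 1))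
    simp only [coeff_X_pow, if_pos rfl, finset_sum_coeff, coeff_C_mul] at h
    rw [Finset.sum_eq_single (M + 1)] at h
    · rw [hlead (M + 1)] at h
      simpa using h.symm
    · intro j hj hne
      have hjlt : j < M + 1 := by
        simp only [Finset.mem_range] at hj; omega
      have : (p j).coeff (M + 1) = 0 := by
        apply coeff_eq_zero_of_natDegree_lt
        rw [(hmonic j).2]; omega
      simp [this]
    · intro h'; exact absurd (Finset.self_mem_range_succ (M + 1)) h'
  -- coefficient at degree M of hx (M+1)
  have h := congrArg (fun q => q.coeff M) (hx (M + 1))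
  simp only [coeff_X_pow, finset_sum_coeff, coeff_C_mul] at h
  have hM : (M : ℕ) ≠ M + 1 := by omega
  rw [if_neg hM] at h
  have hsplit : ∑ j ∈ Finset.range (M + 2), x (M + 1) j * (p j).coeff M
      = x (M + 1) M * (p M).coeff M + x (M + 1) (M + 1) * (p (M + 1)).coeff M := by
    rw [Finset.sum_range_succ, Finset.sum_range_succ]
    have : ∀ j ∈ Finset.range M, x (M + 1) j * (p j).coeff M = 0 := by
      intro j hj
      have hjlt : j < M := Finset.mem_range.mp hj
      have : (p j).coeff M = 0 := by
        apply coeff_eq_zero_of_natDegree_lt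
        rw [(hmonic j).2]; omega
      simp [this]
    rw [Finset.sum_eq_zero this]
    ring
  rw [hsplit, hlead M, hxt, hsub M] at h
  have : x (M + 1) M = -(-(ρ 1 : ℂ) + ∑ i ∈ Finset.Icc 1 M, (ρ i : ℂ) * (ρ (i + 1) : ℂ)) := by
    linear_combination -h
  rw [this]; ring
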